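/- Let G be a connected graph with n vertices, m edges, and cyclomatic number \mu = m - n + 1 > 0. Then the inequality (1/2)(\mu^2/(n-1) - \mu) < \cap(G) is strict. -/

import Mathlib

open SimpleGraph Finset
open scoped Classical

/-- `T` is a spanning tree of `G`. -/
def IsSpanningTree {V : Type*} (G T : SimpleGraph V) : Prop :=
  T ≤ G ∧ T.Connected ∧ T.IsAcyclic

/-- Tree edge `e` lies on the fundamental cycle of `f` with respect to `T`:
deleting `e` from `T` disconnects the endpoints of `f`. -/
def OnFundCycle {V : Type*} (T : SimpleGraph V) (e f : Sym2 V) : Prop :=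
  ∃ v w : V, f = s(v, w) ∧ ¬ (T.deleteEdges {e}).Reachable v w

/-- The bond of a tree edge `e`: all edges of `G` joining the two components of `T - e`. -/
def Bond {V : Type*} (G T : SimpleGraph V) (e : Sym2 V) : Set (Sym2 V) :=
  {f | f ∈ G.edgeSet ∧ OnFundCycle T e f}

/-- The fundamental cycles of `f` and `f'` w.r.t. `T` share at least one tree edge. -/
def CyclesMeet {V : Type*} (T : SimpleGraph V) (f f' : Sym2 V) : Prop :=
  ∃ e ∈ T.edgeSet, OnFundCycle T e f ∧ OnFundCycle T e f'

/-- `∩_G(T)`: the number of unordered pairs of distinct non-tree edges whose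
fundamental cycles w.r.t. `T` share at least one tree edge. -/
noncomputable def interT {V : Type*} [Fintype V] (G T : SimpleGraph V) : ℕ :=
  (((G.edgeSet \ T.edgeSet).toFinset.offDiag).filter
    (fun p => CyclesMeet T p.1 p.2)).card / 2

/-- `∩(G)`: the intersection number, the minimum of `∩_G(T)` over spanning trees `T`. -/
noncomputable def interNum {V : Type*} [Fintype V] (G : SimpleGraph V) : ℕ :=
  sInf {k | ∃ T : SimpleGraph V, IsSpanningTree G T ∧ interT G T = k}

-- aux
section Aux
variable {V : Type*}

lemma reachable_of_forall_adj {G G' : SimpleGraph V}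
    (h : ∀ a b : V, G.Adj a b → G'.Reachable a b) {u v : V} (p : G.Walk u v) :
    G'.Reachable u v := by
  induction p with
  | nil => exact Reachable.refl _
  | cons h' _ ih => exact (h _ _ h').trans ih

lemma exists_spanning_tree' [Fintype V] (G : SimpleGraph V) (hG : G.Connected) :
    ∃ T : SimpleGraph V, IsSpanningTree G T := by
  classical
  suffices key : ∀ (k : ℕ) (G : SimpleGraph V), G.edgeFinset.card ≤ k → G.Connected →
      ∃ T, T ≤ G ∧ T.Connected ∧ T.IsAcyclic by
    obtain ⟨T, h1, h2, h3⟩ := key G.edgeFinset.card G le_rfl hG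
    exact ⟨T, h1, h2, h3⟩
  intro k
  induction k with
  | zero =>
    intro G hcard hconn
    refine ⟨G, le_rfl, hconn, ?_⟩
    intro v c hc
    cases c with
    | nil => exact hc.ne_nil rfl
    | cons h q =>
      have h2 := Finset.card_pos.2 ⟨_, SimpleGraph.mem_edgeFinset.2 (G.mem_edgeSet.2 h)⟩
      omega
  | succ k ih =>
    intro G hcard hconn
    by_cases hA : G.IsAcyclic
    · exact ⟨G, le_rfl, hconn, hA⟩
    · rw [isAcyclic_iff_forall_adj_isBridge] at hA
      push_neg at hA
      obtain ⟨v, w, hadj, hbr⟩ := hA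
      rw [isBridge_iff] at hbr
      push_neg at hbr
      have hreach := hbr
      set G' := G.deleteEdges {s(v, w)} with hG'def
      have hreach' : G'.Reachable v w := hreach
      have hle' : G' ≤ G := G.deleteEdges_le _
      have hconn' : G'.Connected := by
        have hpre : G'.Preconnected := by
          intro a b
          obtain ⟨p⟩ := hconn a b
          refine reachable_of_forall_adj (fun x y hxy => ?_) p
          by_cases hxy' : s(x, y) = s(v, w)
          · rw [Sym2.eq_iff] at hxy'
            rcases hxy' with ⟨rfl, rfl⟩ | ⟨rfl, rfl⟩
            · exact hreach'
            · exact hreach'.symm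
          · exact SimpleGraph.Adj.reachable (by simp [hG'def, hxy', hxy])
        haveI : Nonempty V := hconn.nonempty
        exact SimpleGraph.Connected.mk hpre
      have hlt : G'.edgeFinset.card < G.edgeFinset.card := by
        apply Finset.card_lt_card
        constructor
        · exact SimpleGraph.edgeFinset_subset_edgeFinset.2 hle'
        · intro hsub
          have h1 : s(v, w) ∈ G.edgeFinset := by
            rw [SimpleGraph.mem_edgeFinset]; exact hadj
          have h2 : s(v, w) ∉ G'.edgeFinset := by
            rw [SimpleGraph.mem_edgeFinset, hG'def, edgeSet_deleteEdges]
            simp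
          exact h2 (hsub h1)
      obtain ⟨T, h1, h2, h3⟩ := ih G' (by convert Nat.le_of_lt_succ (lt_of_lt_of_le hlt hcard)) hconn'
      exact ⟨T, h1.trans hle', h2, h3⟩

lemma not_reachable_deleteEdges {T : SimpleGraph V} (hT : T.IsAcyclic) {v w : V}
    {p : T.Walk v w} (hp : p.IsPath) {e : Sym2 V} (he : e ∈ p.edges) :
    ¬ (T.deleteEdges {e}).Reachable v w := by
  rintro ⟨q⟩
  have hq : ∀ e' ∈ q.edges, e' ∈ T.edgeSet := fun e' h' =>
    (SimpleGraph.edgeSet_subset_edgeSet.2 (T.deleteEdges_le {e})) (q.edges_subset_edgeSet h')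
  have huniq : (q.transfer T hq).toPath = (⟨p, hp⟩ : T.Path v w) := hT.path_unique _ _
  have he' : e ∈ (q.transfer T hq).edges := by
    apply Walk.edges_toPath_subset
    rw [huniq]
    exact he
  rw [Walk.edges_transfer] at he'
  have := q.edges_subset_edgeSet he'
  rw [edgeSet_deleteEdges] at this
  exact this.2 rfl

lemma two_le_card_fund [Fintype V] {T : SimpleGraph V} (hc : T.Connected) (ha : T.IsAcyclic)
    {v w : V} (hvw : v ≠ w) (hfT : s(v, w) ∉ T.edgeSet) :
    2 ≤ (T.edgeSet.toFinset.filter (fun e => OnFundCycle T e s(v, w))).card := by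
  obtain ⟨p0⟩ := hc v w
  set p : T.Path v w := p0.toPath with hpdef
  have hpath : (p : T.Walk v w).IsPath := p.2
  have hlen : 2 ≤ (p : T.Walk v w).length := by
    have h0 : (p : T.Walk v w).length ≠ 0 := fun h => hvw (Walk.eq_of_length_eq_zero h)
    have h1 : (p : T.Walk v w).length ≠ 1 := fun h =>
      hfT (T.mem_edgeSet.2 (Walk.adj_of_length_eq_one h))
    omega
  have hsub : (p : T.Walk v w).edges.toFinset ⊆
      T.edgeSet.toFinset.filter (fun e => OnFundCycle T e s(v, w)) := by
    intro e he
    rw [List.mem_toFinset] at he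
    refine Finset.mem_filter.2 ⟨Set.mem_toFinset.2 ((p : T.Walk v w).edges_subset_edgeSet he), ?_⟩
    exact ⟨v, w, rfl, not_reachable_deleteEdges ha hpath he⟩
  calc 2 ≤ (p : T.Walk v w).edges.toFinset.card := by
        rw [List.toFinset_card_of_nodup hpath.edges_nodup, Walk.length_edges]
        exact hlen
    _ ≤ _ := Finset.card_le_card hsub

end Aux

noncomputable def interT' {V : Type*} [Fintype V] (G T : SimpleGraph V) : ℕ :=
  (((G.edgeSet \ T.edgeSet).toFinset.offDiag).filter
    (fun p => CyclesMeet T p.1 p.2)).card / 2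

set_option maxHeartbeats 2000000 in
lemma interT_bound {V : Type*} [Fintype V] [DecidableEq V]
    (G T : SimpleGraph V) (hT : IsSpanningTree G T)
    (hμpos : 0 < G.edgeSet.toFinset.card + 1 - Fintype.card V) :
    (1 / 2 : ℝ) * (((G.edgeSet.toFinset.card + 1 - Fintype.card V : ℕ) : ℝ) ^ 2
          / ((Fintype.card V : ℝ) - 1)
        - ((G.edgeSet.toFinset.card + 1 - Fintype.card V : ℕ) : ℝ)) < interT' G T := by
  obtain ⟨hle, hconn, hacy⟩ := hT
  set tE : Finset (Sym2 V) := T.edgeSet.toFinset with htEdef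
  set F : Finset (Sym2 V) := (G.edgeSet \ T.edgeSet).toFinset with hFdef
  have htree : T.IsTree := ⟨hconn, hacy⟩
  have hcardT : tE.card + 1 = Fintype.card V := htree.card_edgeFinset
  have hsubE : tE ⊆ G.edgeSet.toFinset :=
    Set.toFinset_subset_toFinset.2 (SimpleGraph.edgeSet_subset_edgeSet.2 hle)
  have hF : F = G.edgeSet.toFinset \ tE := Set.toFinset_diff _ _
  have hm : F.card + tE.card = G.edgeSet.toFinset.card := by
    rw [hF]; exact Finset.card_sdiff_add_card_eq_card hsubE
  have hμeq : G.edgeSet.toFinset.card + 1 - Fintype.card V = F.card := by omega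
  have hμ1 : 1 ≤ F.card := by omega
  have ht2 : 2 ≤ tE.card := by
    by_contra hcon
    push_neg at hcon
    have hch : G.edgeSet.toFinset.card ≤ (Fintype.card V).choose 2 :=
      SimpleGraph.card_edgeFinset_le_card_choose_two
    have hn2 : Fintype.card V ≤ 2 := by omega
    have hch2 : G.edgeSet.toFinset.card ≤ 1 :=
      le_trans hch (le_trans (Nat.choose_le_choose 2 hn2) (by norm_num))
    have hn1 : Fintype.card V = 1 := by omega
    rw [hn1, show Nat.choose 1 2 = 0 from rfl] at hch
    omega
  set Pn : Finset (Sym2 V × Sym2 V) :=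
    F.offDiag.filter (fun p => CyclesMeet T p.1 p.2) with hPdef
  -- weights
  set E : Sym2 V → Finset (Sym2 V) :=
    fun f => tE.filter (fun e => OnFundCycle T e f) with hEdef
  set wgt : Sym2 V → Sym2 V → ℝ :=
    fun f e => if e ∈ E f then ((E f).card : ℝ)⁻¹ else 0 with hwdef
  have hE2 : ∀ f ∈ F, 2 ≤ (E f).card := by
    intro f hf
    rw [hFdef, Set.mem_toFinset] at hf
    obtain ⟨hfG, hfT⟩ := hf
    revert hfG hfT
    induction f using Sym2.ind with
    | _ v w =>
      intro hfG hfT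
      exact two_le_card_fund hconn hacy (G.mem_edgeSet.1 hfG).ne hfT
  have hEsub : ∀ f, E f ⊆ tE := fun f => Finset.filter_subset _ _
  have hw_nonneg : ∀ f e, 0 ≤ wgt f e := by
    intro f e
    rw [hwdef]
    dsimp only
    split <;> positivity
  have hw_le : ∀ f ∈ F, ∀ e, wgt f e ≤ 1 / 2 := by
    intro f hf e
    rw [hwdef]
    dsimp only
    split
    · rw [show (1:ℝ)/2 = (2:ℝ)⁻¹ by norm_num]
      apply inv_anti₀ (by norm_num)
      exact_mod_cast hE2 f hf
    · norm_num
  have hsum1 : ∀ f ∈ F, ∑ e ∈ tE, wgt f e = 1 := by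
    intro f hf
    have h2 := hE2 f hf
    rw [hwdef]
    dsimp only
    rw [Finset.sum_ite_mem, Finset.inter_eq_right.2 (hEsub f), Finset.sum_const,
      nsmul_eq_mul]
    apply mul_inv_cancel₀
    have h0 : 0 < (E f).card := by omega
    exact_mod_cast Nat.pos_iff_ne_zero.1 h0
  -- the quadratic form
  have hc_half : ∀ f ∈ F, ∀ f' ∈ F, ∑ e ∈ tE, wgt f e * wgt f' e ≤ 1 / 2 := by
    intro f hf f' hf'
    calc ∑ e ∈ tE, wgt f e * wgt f' e
        ≤ ∑ e ∈ tE, (1 / 2) * wgt f' e := by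
          apply Finset.sum_le_sum
          intro e _
          exact mul_le_mul_of_nonneg_right (hw_le f hf e) (hw_nonneg f' e)
      _ = 1 / 2 := by rw [← Finset.mul_sum, hsum1 f' hf']; ring
  have hc_zero : ∀ f f', ¬CyclesMeet T f f' → ∑ e ∈ tE, wgt f e * wgt f' e = 0 := by
    intro f f' hnm
    apply Finset.sum_eq_zero
    intro e _
    by_cases he : e ∈ E f
    · by_cases he' : e ∈ E f'
      · exfalso
        apply hnm
        rw [hEdef] at he he'
        obtain ⟨heT, heO⟩ := Finset.mem_filter.1 he
        obtain ⟨_, heO'⟩ := Finset.mem_filter.1 he'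
        exact ⟨e, Set.mem_toFinset.1 heT, heO, heO'⟩
      · rw [hwdef]; dsimp only; rw [if_neg he', mul_zero]
    · rw [hwdef]; dsimp only; rw [if_neg he, zero_mul]
  -- Cauchy-Schwarz
  have hsum_comm : ∑ e ∈ tE, ∑ f ∈ F, wgt f e = (F.card : ℝ) := by
    rw [Finset.sum_comm]
    rw [Finset.sum_congr rfl (fun f hf => hsum1 f hf)]
    simp
  have hCS : ((F.card : ℝ)) ^ 2 ≤ (tE.card : ℝ) * ∑ e ∈ tE, (∑ f ∈ F, wgt f e) ^ 2 := by
    rw [← hsum_comm]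
    exact sq_sum_le_card_mul_sum_sq
  have hexpand : ∑ e ∈ tE, (∑ f ∈ F, wgt f e) ^ 2
      = ∑ f ∈ F, ∑ f' ∈ F, ∑ e ∈ tE, wgt f e * wgt f' e := by
    have h1 : ∀ e, (∑ f ∈ F, wgt f e) ^ 2 = ∑ f ∈ F, ∑ f' ∈ F, wgt f e * wgt f' e :=
      fun e => by rw [sq, Finset.sum_mul_sum]
    rw [Finset.sum_congr rfl (fun e _ => h1 e), Finset.sum_comm]
    refine Finset.sum_congr rfl (fun f _ => ?_)
    rw [Finset.sum_comm]
  have hdouble : ∑ f ∈ F, ∑ f' ∈ F, ∑ e ∈ tE, wgt f e * wgt f' e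
      = ∑ p ∈ F ×ˢ F, ∑ e ∈ tE, wgt p.1 e * wgt p.2 e := by
    rw [Finset.sum_product]
  have hsplit : ∑ p ∈ F ×ˢ F, ∑ e ∈ tE, wgt p.1 e * wgt p.2 e
      ≤ ((F.card : ℝ) + (Pn.card : ℝ)) * (1 / 2) := by
    rw [← Finset.diag_union_offDiag F, Finset.sum_union (Finset.disjoint_diag_offDiag F)]
    have hdiag : ∑ p ∈ F.diag, ∑ e ∈ tE, wgt p.1 e * wgt p.2 e ≤ (F.card : ℝ) * (1 / 2) := by
      have := Finset.sum_le_card_nsmul F.diag (fun p => ∑ e ∈ tE, wgt p.1 e * wgt p.2 e)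
        (1 / 2) (fun p hp => by
          obtain ⟨h1, h2⟩ := Finset.mem_diag.1 hp
          exact hc_half p.1 h1 p.2 (h2 ▸ h1))
      rw [Finset.diag_card] at this
      simpa [nsmul_eq_mul] using this
    have hoff : ∑ p ∈ F.offDiag, ∑ e ∈ tE, wgt p.1 e * wgt p.2 e
        ≤ (Pn.card : ℝ) * (1 / 2) := by
      rw [← Finset.sum_filter_add_sum_filter_not F.offDiag (fun p => CyclesMeet T p.1 p.2)]
      have hz : ∑ p ∈ F.offDiag.filter (fun p => ¬CyclesMeet T p.1 p.2),
          ∑ e ∈ tE, wgt p.1 e * wgt p.2 e = 0 := by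
        apply Finset.sum_eq_zero
        intro p hp
        exact hc_zero p.1 p.2 (Finset.mem_filter.1 hp).2
      rw [hz, add_zero]
      have := Finset.sum_le_card_nsmul Pn (fun p => ∑ e ∈ tE, wgt p.1 e * wgt p.2 e)
        (1 / 2) (fun p hp => by
          obtain ⟨hpo, _⟩ := Finset.mem_filter.1 hp
          obtain ⟨h1, h2, _⟩ := Finset.mem_offDiag.1 hpo
          exact hc_half p.1 h1 p.2 h2)
      simpa [nsmul_eq_mul] using this
    linarith
  have hkey : ((F.card : ℝ)) ^ 2 ≤ (tE.card : ℝ) * (((F.card : ℝ) + (Pn.card : ℝ)) * (1 / 2)) := by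
    calc ((F.card : ℝ)) ^ 2 ≤ (tE.card : ℝ) * ∑ e ∈ tE, (∑ f ∈ F, wgt f e) ^ 2 := hCS
      _ = (tE.card : ℝ) * ∑ p ∈ F ×ˢ F, ∑ e ∈ tE, wgt p.1 e * wgt p.2 e := by
          rw [hexpand, hdouble]
      _ ≤ _ := by
          apply mul_le_mul_of_nonneg_left hsplit (by positivity)
  -- finish
  have hinst : ∀ (i1 : Fintype ↥(G.edgeSet \ T.edgeSet)),
      @Set.toFinset _ _ i1 = F := by
    intro i1
    rw [hFdef]
    congr 1
    exact Subsingleton.elim _ _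
  have hIT : interT' G T = Pn.card / 2 := by
    unfold interT'
    rw [hinst, hPdef]
  have hdiv : Pn.card ≤ 2 * interT' G T + 1 := by
    rw [hIT]
    omega
  rw [hμeq]
  have hncast : ((Fintype.card V : ℝ)) - 1 = (tE.card : ℝ) := by
    rw [← hcardT]
    push_cast
    ring
  rw [hncast]
  have htpos : (0 : ℝ) < (tE.card : ℝ) := by
    have : (0:ℕ) < tE.card := by omega
    exact_mod_cast this
  rcases lt_or_ge F.card tE.card with hlt | hge
  · -- LHS negative
    have h1 : ((F.card : ℝ)) ^ 2 / (tE.card : ℝ) < (F.card : ℝ) := by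
      rw [div_lt_iff₀ htpos]
      have hμr : (1 : ℝ) ≤ (F.card : ℝ) := by exact_mod_cast hμ1
      have hltr : (F.card : ℝ) < (tE.card : ℝ) := by exact_mod_cast hlt
      nlinarith
    have h2 : (0 : ℝ) ≤ (interT' G T : ℝ) := Nat.cast_nonneg _
    linarith
  · -- main case
    set I : ℝ := (interT' G T : ℝ) with hIdef
    have hI0 : (0:ℝ) ≤ I := Nat.cast_nonneg _
    have hIP : (Pn.card : ℝ) ≤ 2 * I + 1 := by
      rw [hIdef]
      exact_mod_cast hdiv
    have hger : (tE.card : ℝ) ≤ (F.card : ℝ) := by exact_mod_cast hge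
    have ht2r : (2 : ℝ) ≤ (tE.card : ℝ) := by exact_mod_cast ht2
    have hfinal : ((F.card : ℝ)) ^ 2 < (2 * I + (F.card : ℝ)) * (tE.card : ℝ) := by
      have htP : (tE.card : ℝ) * (Pn.card : ℝ) ≤ (tE.card : ℝ) * (2 * I + 1) :=
        mul_le_mul_of_nonneg_left hIP (le_of_lt htpos)
      nlinarith
    have hq : ((F.card : ℝ)) ^ 2 / (tE.card : ℝ) < 2 * I + (F.card : ℝ) :=
      (div_lt_iff₀ htpos).2 hfinal
    linarith

/-- Strict lower bound: if `μ = m - n + 1 > 0` then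
`(1/2)(μ²/(n-1) - μ) < ∩(G)`. -/
theorem lower_bound_strict {V : Type*} [Fintype V] [DecidableEq V]
    (G : SimpleGraph V) (hG : G.Connected)
    (hμ : 0 < G.edgeSet.toFinset.card + 1 - Fintype.card V) :
    (1 / 2 : ℝ) * (((G.edgeSet.toFinset.card + 1 - Fintype.card V : ℕ) : ℝ) ^ 2
          / ((Fintype.card V : ℝ) - 1)
        - ((G.edgeSet.toFinset.card + 1 - Fintype.card V : ℕ) : ℝ)) < interNum G := by
  obtain ⟨T0, hT0⟩ := exists_spanning_tree' G hG
  have hne : {k | ∃ T : SimpleGraph V, IsSpanningTree G T ∧ interT G T = k}.Nonempty :=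
    ⟨interT G T0, T0, hT0, rfl⟩
  obtain ⟨T, hT, hval⟩ := Nat.sInf_mem hne
  have h := interT_bound G T hT hμ
  rw [interNum, ← hval]
  have he : interT G T = interT' G T := rfl
  rw [he]
  exact h
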